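/- Fix an integer n ≥ 2 and set b := -n + i. Let D ⊆ {0, 1, …, n²} be such that Δ := D − D is sparse. Let k ≥ 1 and let (δ_1, …, δ_k) and (δ'_1, …, δ'_k) be tuples with all δ_j, δ'_j ∈ Δ such that δ_j ≠ δ'_j for some index 1 ≤ j ≤ k. Then the k-tiles 𝓔_{δ_1…δ_k} and 𝓔_{δ'_1…δ'_k} of 𝓔_n are disjoint. -/

import Mathlib

open Complex Filter Pointwise

/-- `piSum b d = ∑_{j≥1} d_j b^{-j}` (0-indexed: `d j` is the `(j+1)`-st digit). -/
noncomputable def piSum (b : ℂ) (d : ℕ → ℤ) : ℂ :=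
  ∑' j : ℕ, (d j : ℂ) * b ^ (-((j : ℤ) + 1))

/-- The `n`-th extended tile `𝓔_n`. -/
def extTile (n : ℕ) : Set ℂ :=
  {z | ∃ d : ℕ → ℤ, (∀ j, |d j| ≤ (n : ℤ) ^ 2) ∧
    z = piSum (-(n : ℂ) + Complex.I) d}

/-- The `k`-tile of a set `T` with digits `d_1, …, d_k` (0-indexed). -/
def kTile (b : ℂ) (T : Set ℂ) (k : ℕ) (d : Fin k → ℤ) : Set ℂ :=
  {z | ∃ t ∈ T, z = (∑ j : Fin k, (d j : ℂ) * b ^ (-((j : ℤ) + 1))) + b ^ (-(k : ℤ)) * t}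

/-- `Δ` is sparse: all distinct pairs differ by more than `2` when `n ≥ 5`,
and by more than `3` when `n ∈ {2, 3, 4}`. -/
def Sparse (n : ℕ) (Δ : Set ℤ) : Prop :=
  ∀ δ ∈ Δ, ∀ δ' ∈ Δ, δ ≠ δ' →
    (5 ≤ n → 2 < |δ - δ'|) ∧ (n = 2 ∨ n = 3 ∨ n = 4 → 3 < |δ - δ'|)

lemma normB (n : ℕ) : ‖(-(n:ℂ) + Complex.I)‖ = Real.sqrt (n^2+1) := by
  rw [Complex.norm_def, Complex.normSq_apply]
  norm_num [Complex.add_re, Complex.add_im]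
  ring_nf

lemma normB_sq (n : ℕ) (hn : 2 ≤ n) : ‖(-(n:ℂ) + Complex.I)‖^2 = n^2+1 := by
  rw [normB, Real.sq_sqrt]; positivity

lemma oneltB (n : ℕ) (hn : 2 ≤ n) : 1 < ‖(-(n:ℂ) + Complex.I)‖ := by
  rw [normB]
  have : (1:ℝ) < n^2+1 := by
    have : (1:ℝ) ≤ (n:ℝ) := by exact_mod_cast Nat.one_le_of_lt hn
    nlinarith
  nlinarith [Real.sq_sqrt (show (0:ℝ) ≤ n^2+1 by positivity), Real.sqrt_nonneg ((n:ℝ)^2+1)]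

lemma Bne (n : ℕ) (hn : 2 ≤ n) : (-(n:ℂ) + Complex.I) ≠ 0 := by
  intro h
  have := oneltB n hn
  rw [h] at this; simp at this
  linarith

lemma normβ (n : ℕ) (hn : 2 ≤ n) : ‖(-(n:ℂ) + Complex.I)⁻¹‖ < 1 := by
  rw [norm_inv]
  have h := oneltB n hn
  rw [inv_lt_one_iff₀]; right; exact h

lemma summ_aux (β : ℂ) (hβ : ‖β‖ < 1) (M : ℝ) (a : ℕ → ℂ) (ha : ∀ j, ‖a j‖ ≤ M) :
    Summable (fun j : ℕ => a j * β ^ (j+1)) := by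
  apply Summable.of_norm_bounded (g := fun j => M * ‖β‖ ^ j)
  · exact Summable.mul_left M (summable_geometric_of_lt_one (norm_nonneg β) hβ)
  · intro j
    rw [norm_mul, norm_pow]
    have h1 : ‖β‖^(j+1) ≤ ‖β‖^j := by
      apply pow_le_pow_of_le_one (norm_nonneg β) hβ.le; omega
    have h0 : (0:ℝ) ≤ M := le_trans (norm_nonneg _) (ha 0)
    calc ‖a j‖ * ‖β‖^(j+1) ≤ M * ‖β‖^(j+1) := by
          apply mul_le_mul_of_nonneg_right (ha j) (by positivity)
      _ ≤ M * ‖β‖^j := by nlinarith [norm_nonneg (a j)]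

lemma summ_aux_re (β : ℂ) (hβ : ‖β‖ < 1) (w : ℂ) :
    Summable (fun j : ℕ => |(w * β ^ (j+1)).re|) := by
  apply Summable.of_norm_bounded (g := fun j => ‖w‖ * ‖β‖ ^ j)
  · exact Summable.mul_left _ (summable_geometric_of_lt_one (norm_nonneg β) hβ)
  · intro j
    rw [Real.norm_eq_abs, _root_.abs_abs ((w * β ^ (j+1)).re)]
    calc |(w * β ^ (j+1)).re| ≤ ‖w * β^(j+1)‖ := Complex.abs_re_le_norm _
      _ = ‖w‖ * ‖β‖^(j+1) := by rw [norm_mul, norm_pow]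
      _ ≤ ‖w‖ * ‖β‖^j := by
          apply mul_le_mul_of_nonneg_left _ (norm_nonneg w)
          apply pow_le_pow_of_le_one (norm_nonneg β) hβ.le; omega

lemma norm_intCast' (m : ℤ) : ‖((m:ℂ))‖ = |(m:ℝ)| := by
  push_cast [Complex.norm_intCast]; norm_num

/-- The key inequality obtained from a vanishing power series with integer coefficients. -/
lemma keyineq (n : ℕ) (hn : 2 ≤ n) (c : ℕ → ℤ) (hbd : ∀ j, |c j| ≤ 2 * (n:ℤ)^2)
    (hsum : ∑' j : ℕ, (c j : ℂ) * ((-(n:ℂ) + Complex.I)⁻¹)^(j+1) = 0)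
    (w : ℂ) (hw : 0 ≤ w.re) :
    w.re * |(c 0 : ℝ)| ≤
      2*(n:ℝ)^2 * ∑' j : ℕ, |(w * ((-(n:ℂ)+Complex.I)⁻¹)^(j+1)).re| := by
  set B : ℂ := -(n:ℂ) + Complex.I with hB
  set β : ℂ := B⁻¹ with hβ
  have hβ1 : ‖β‖ < 1 := normβ n hn
  have hM : ∀ j, ‖((c j : ℂ))‖ ≤ 2*(n:ℝ)^2 := by
    intro j
    rw [norm_intCast', ← Int.cast_abs]
    have := hbd j
    calc ((|c j| : ℤ) : ℝ) ≤ ((2*(n:ℤ)^2 : ℤ) : ℝ) := by exact_mod_cast this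
      _ = 2*(n:ℝ)^2 := by push_cast; ring
  have hsble : Summable (fun j : ℕ => (c j : ℂ) * β^(j+1)) := summ_aux β hβ1 _ _ hM
  have hsble1 : Summable (fun j : ℕ => (c (j+1) : ℂ) * β^(j+1)) :=
    summ_aux β hβ1 _ (fun j => ((c (j+1):ℂ))) (fun j => hM (j+1))
  have hBne : B ≠ 0 := Bne n hn
  have hBβ : B * β = 1 := mul_inv_cancel₀ hBne
  have h1 : ∑' j:ℕ, (c (j+1) : ℂ) * β^(j+1+1) = -((c 0:ℂ) * β^(0+1)) := by
    have h := Summable.tsum_eq_zero_add hsble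
    rw [hsum] at h
    linear_combination -h
  have h2 : ∑' j:ℕ, (c (j+1):ℂ) * β^(j+1) = -(c 0:ℂ) := by
    have e : ∀ j:ℕ, (c (j+1):ℂ) * β^(j+1) = B * ((c (j+1):ℂ) * β^(j+1+1)) := by
      intro j
      linear_combination (-(c (j+1):ℂ) * β^(j+1)) * hBβ
    calc ∑' j:ℕ, (c (j+1):ℂ) * β^(j+1) = ∑' j:ℕ, B * ((c (j+1):ℂ) * β^(j+1+1)) := tsum_congr e
      _ = B * ∑' j:ℕ, ((c (j+1):ℂ) * β^(j+1+1)) := tsum_mul_left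
      _ = B * -((c 0:ℂ) * β^(0+1)) := by rw [h1]
      _ = -(c 0:ℂ) := by linear_combination (-(c 0 : ℂ)) * hBβ
  have h3 : (c 0 : ℝ) * w.re = -∑' j:ℕ, ((c (j+1):ℝ) * (w * β^(j+1)).re) := by
    have hl : Summable (fun j:ℕ => w * ((c (j+1):ℂ) * β^(j+1))) := hsble1.mul_left w
    have hre : (w * ∑' j:ℕ, ((c (j+1):ℂ) * β^(j+1))).re = (w * -(c 0:ℂ)).re := by rw [h2]
    rw [← tsum_mul_left, Complex.re_tsum hl] at hre
    have e2 : ∀ j:ℕ, (w * ((c (j+1):ℂ) * β^(j+1))).re = (c (j+1):ℝ) * (w * β^(j+1)).re := by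
      intro j
      rw [show w * ((c (j+1):ℂ) * β^(j+1)) = (c (j+1):ℂ) * (w * β^(j+1)) by ring]
      rw [Complex.mul_re, Complex.intCast_re, Complex.intCast_im]
      ring
    rw [tsum_congr e2] at hre
    have e3 : (w * -(c 0:ℂ)).re = -((c 0:ℝ) * w.re) := by
      rw [show w * -(c 0:ℂ) = (-(c 0:ℂ)) * w by ring, Complex.mul_re]
      simp
    rw [e3] at hre
    linarith
  have habs : Summable (fun j:ℕ => |(w * β^(j+1)).re|) := summ_aux_re β hβ1 w
  have habs2 : Summable (fun j:ℕ => 2*(n:ℝ)^2 * |(w * β^(j+1)).re|) := habs.mul_left _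
  have hcb : ∀ j:ℕ, |(c (j+1):ℝ)| ≤ 2*(n:ℝ)^2 := by
    intro j
    have := hM (j+1)
    rwa [norm_intCast'] at this
  have hterm : Summable (fun j:ℕ => |(c (j+1):ℝ) * (w * β^(j+1)).re|) := by
    apply Summable.of_nonneg_of_le (fun j => abs_nonneg _) _ habs2
    intro j
    rw [abs_mul]
    exact mul_le_mul_of_nonneg_right (hcb j) (abs_nonneg _)
  calc w.re * |(c 0:ℝ)| = |(c 0:ℝ) * w.re| := by rw [abs_mul, _root_.abs_of_nonneg hw]; ring
    _ = |∑' j:ℕ, ((c (j+1):ℝ) * (w * β^(j+1)).re)| := by rw [h3, abs_neg]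
    _ ≤ ∑' j:ℕ, |(c (j+1):ℝ) * (w * β^(j+1)).re| := by
        have hterm' : Summable (fun j:ℕ => ‖(c (j+1):ℝ) * (w * β^(j+1)).re‖) := by
          simpa only [Real.norm_eq_abs] using hterm
        have h5 := norm_tsum_le_tsum_norm hterm'
        rw [Real.norm_eq_abs] at h5
        rwa [tsum_congr (fun j:ℕ => Real.norm_eq_abs ((c (j+1):ℝ) * (w * β^(j+1)).re))] at h5
    _ ≤ ∑' j:ℕ, 2*(n:ℝ)^2 * |(w * β^(j+1)).re| := by
        apply Summable.tsum_le_tsum _ hterm habs2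
        intro j
        rw [abs_mul]
        exact mul_le_mul_of_nonneg_right (hcb j) (abs_nonneg _)
    _ = 2*(n:ℝ)^2 * ∑' j:ℕ, |(w * β^(j+1)).re| := tsum_mul_left


/-- |Im (z^l)| ≤ l ‖z‖^(l+1) when |Im z| ≤ ‖z‖². -/
lemma im_pow_bound (z : ℂ) (hz : |z.im| ≤ ‖z‖^2) : ∀ l : ℕ, |(z^l).im| ≤ l * ‖z‖^(l+1) := by
  intro l
  induction l with
  | zero => simp
  | succ l ih =>
    have h1 : (z^(l+1)).im = (z^l).re * z.im + (z^l).im * z.re := by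
      rw [pow_succ, Complex.mul_im]
    rw [h1, Nat.cast_add, Nat.cast_one]
    have h2 : |(z^l).re| ≤ ‖z‖^l := by
      calc |(z^l).re| ≤ ‖z^l‖ := Complex.abs_re_le_norm _
        _ = ‖z‖^l := norm_pow z l
    have h3 : |z.re| ≤ ‖z‖ := Complex.abs_re_le_norm _
    have hn : (0:ℝ) ≤ ‖z‖ := norm_nonneg z
    calc |(z^l).re * z.im + (z^l).im * z.re| ≤ |(z^l).re * z.im| + |(z^l).im * z.re| := abs_add_le _ _
      _ = |(z^l).re| * |z.im| + |(z^l).im| * |z.re| := by rw [abs_mul, abs_mul]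
      _ ≤ ‖z‖^l * ‖z‖^2 + (l * ‖z‖^(l+1)) * ‖z‖ := by
          apply add_le_add
          · exact mul_le_mul h2 hz (abs_nonneg _) (by positivity)
          · exact mul_le_mul ih h3 (abs_nonneg _) (by positivity)
      _ = (l+1) * ‖z‖^(l+1+1) := by ring
    

lemma core_ge3 (n : ℕ) (hn : 3 ≤ n) (c : ℕ → ℤ) (hbd : ∀ j, |c j| ≤ 2 * (n:ℤ)^2)
    (hsum : ∑' j : ℕ, (c j : ℂ) * ((-(n:ℂ) + Complex.I)⁻¹)^(j+1) = 0)
    (A : ℝ) (hApos : 0 < A) (hA : A ≤ |(c 0 : ℝ)|)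
    (hnum : 2*(n:ℝ)^2 < A * (Real.sqrt ((n:ℝ)^2+1) - 1)^2) : False := by
  have hn2 : 2 ≤ n := by omega
  set B : ℂ := -(n:ℂ) + Complex.I with hB
  set β : ℂ := B⁻¹ with hβdef
  set w : ℂ := 1 + (n:ℂ) * Complex.I with hwdef
  have hw : w.re = 1 := by simp [hwdef]
  have hβ1 : ‖β‖ < 1 := normβ n hn2
  have hkey := keyineq n hn2 c hbd hsum w (by rw [hw]; norm_num)
  rw [hw, one_mul] at hkey
  have hBne : B ≠ 0 := Bne n hn2
  have hwβ : w * β = -Complex.I := by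
    have hwB : w = -Complex.I * B := by
      rw [hB, hwdef]
      linear_combination Complex.I_sq
    rw [hwB, hβdef, mul_assoc, mul_inv_cancel₀ hBne, mul_one]
  have hterm : ∀ j : ℕ, (w * β^(j+1)).re = (β^j).im := by
    intro j
    rw [pow_succ', ← mul_assoc, hwβ]
    simp [Complex.mul_re]
  have himβ : |β.im| ≤ ‖β‖^2 := by
    have h1 : Complex.normSq B = (n:ℝ)^2 + 1 := by
      rw [← Complex.sq_norm]
      exact normB_sq n hn2
    have h2 : β.im = -(1:ℝ) / ((n:ℝ)^2+1) := by
      rw [hβdef, Complex.inv_im, h1]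
      norm_num [hB]
    have h3 : ‖β‖^2 = (((n:ℝ)^2+1))⁻¹ := by
      rw [hβdef, norm_inv, inv_pow, normB_sq n hn2]
    rw [h2, h3, abs_div]
    rw [_root_.abs_of_nonneg (by positivity : (0:ℝ) ≤ (n:ℝ)^2+1), abs_neg, abs_one]
    rw [one_div]
  set r : ℝ := ‖β‖ with hrdef
  have hr0 : 0 ≤ r := norm_nonneg β
  have hrabs : ‖r‖ < 1 := by rwa [Real.norm_eq_abs, _root_.abs_of_nonneg hr0]
  have hgeo : Summable (fun j : ℕ => (j:ℝ) * r^(j+1)) := by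
    have h := (summable_pow_mul_geometric_of_norm_lt_one 1 hrabs).mul_left r
    apply h.congr
    intro j
    simp [pow_succ]
    ring
  have habs : Summable (fun j:ℕ => |(β^j).im|) := by
    apply Summable.of_nonneg_of_le (fun j => abs_nonneg _) _ hgeo
    intro j
    simpa using im_pow_bound β himβ j
  have hSle : ∑' j:ℕ, |(w * β^(j+1)).re| ≤ r * (r / (1-r)^2) := by
    calc ∑' j:ℕ, |(w * β^(j+1)).re| = ∑' j:ℕ, |(β^j).im| := by
          exact tsum_congr (fun j => by rw [hterm j])
      _ ≤ ∑' j:ℕ, (j:ℝ) * r^(j+1) := by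
          apply Summable.tsum_le_tsum _ habs hgeo
          intro j
          simpa using im_pow_bound β himβ j
      _ = r * ∑' j:ℕ, (j:ℝ) * r^j := by
          rw [← tsum_mul_left]
          exact tsum_congr (fun j => by ring)
      _ = r * (r / (1-r)^2) := by rw [tsum_coe_mul_geometric_of_norm_lt_one hrabs]
  have hchain : A ≤ 2*(n:ℝ)^2 * (r * (r/(1-r)^2)) := by
    calc A ≤ |(c 0:ℝ)| := hA
      _ ≤ 2*(n:ℝ)^2 * ∑' j:ℕ, |(w * β^(j+1)).re| := hkey
      _ ≤ 2*(n:ℝ)^2 * (r * (r/(1-r)^2)) := by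
          apply mul_le_mul_of_nonneg_left hSle (by positivity)
  have hr1 : 0 < 1 - r := by linarith
  have h6 : A * (1-r)^2 ≤ 2*(n:ℝ)^2 * r^2 := by
    have e : r * (r / (1-r)^2) * (1-r)^2 = r^2 := by field_simp
    calc A * (1-r)^2 ≤ (2*(n:ℝ)^2 * (r * (r/(1-r)^2))) * (1-r)^2 :=
          mul_le_mul_of_nonneg_right hchain (by positivity)
      _ = 2*(n:ℝ)^2 * r^2 := by rw [mul_assoc, e]
  set s : ℝ := Real.sqrt ((n:ℝ)^2+1) with hsdef
  have hs1 : 1 < s := by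
    have := oneltB n hn2
    rwa [normB] at this
  have hrs : r * s = 1 := by
    rw [hrdef, hβdef, norm_inv, normB]
    rw [inv_mul_cancel₀ (by linarith : Real.sqrt ((n:ℝ)^2+1) ≠ 0)]
  have h7 : A * (s-1)^2 ≤ 2*(n:ℝ)^2 := by
    have h8 := mul_le_mul_of_nonneg_left h6 (sq_nonneg s)
    calc A * (s-1)^2 = s^2 * (A * (1-r)^2) := by
          linear_combination (A * (2*s - s*r - 1)) * hrs
      _ ≤ s^2 * (2*(n:ℝ)^2 * r^2) := h8
      _ = 2*(n:ℝ)^2 * (r*s)^2 := by ring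
      _ = 2*(n:ℝ)^2 := by rw [hrs]; ring
  linarith


lemma core_two (c : ℕ → ℤ) (hbd : ∀ j, |c j| ≤ 2 * ((2:ℕ):ℤ)^2) (hc0 : 4 ≤ |c 0|)
    (hsum : ∑' j:ℕ, (c j:ℂ) * ((-((2:ℕ):ℂ) + Complex.I)⁻¹)^(j+1) = 0) : False := by
  set B : ℂ := -((2:ℕ):ℂ) + Complex.I with hB
  set β : ℂ := B⁻¹ with hβdef
  set w : ℂ := 5 + 8*Complex.I with hwdef
  have hw : w.re = 5 := by simp [hwdef]
  have hβ1 : ‖β‖ < 1 := normβ 2 le_rfl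
  have hkey := keyineq 2 le_rfl c hbd hsum w (by rw [hw]; norm_num)
  rw [hw] at hkey
  have hc0' : (4:ℝ) ≤ |(c 0 : ℝ)| := by
    rw [← Int.cast_abs]
    exact_mod_cast hc0
  -- explicit value of β
  have hβv : β = ((-2/5:ℝ):ℂ) + ((-1/5:ℝ):ℂ)*Complex.I := by
    rw [hβdef, hB]
    apply inv_eq_of_mul_eq_one_right
    push_cast
    linear_combination (-(1/5):ℂ) * Complex.I_sq
  have q1 : β^1 = ((-2/5:ℝ):ℂ) + ((-1/5:ℝ):ℂ)*Complex.I := by rw [pow_one, hβv]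
  have q2 : β^2 = ((3/25:ℝ):ℂ) + ((4/25:ℝ):ℂ)*Complex.I := by
    have e2 : β^2 = β^1 * β := by ring
    rw [e2, q1, hβv]
    push_cast
    linear_combination ((1/25:ℂ))*Complex.I_sq
  have q3 : β^3 = ((-2/125:ℝ):ℂ) + ((-11/125:ℝ):ℂ)*Complex.I := by
    have e3 : β^3 = β^2 * β := by ring
    rw [e3, q2, hβv]
    push_cast
    linear_combination ((-4/125:ℂ))*Complex.I_sq
  have q4 : β^4 = ((-7/625:ℝ):ℂ) + ((24/625:ℝ):ℂ)*Complex.I := by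
    have e4 : β^4 = β^3 * β := by ring
    rw [e4, q3, hβv]
    push_cast
    linear_combination ((11/625:ℂ))*Complex.I_sq
  have q5 : β^5 = ((38/3125:ℝ):ℂ) + ((-41/3125:ℝ):ℂ)*Complex.I := by
    have e5 : β^5 = β^4 * β := by ring
    rw [e5, q4, hβv]
    push_cast
    linear_combination ((-24/3125:ℂ))*Complex.I_sq
  have q6 : β^6 = ((-117/15625:ℝ):ℂ) + ((44/15625:ℝ):ℂ)*Complex.I := by
    have e6 : β^6 = β^5 * β := by ring
    rw [e6, q5, hβv]
    push_cast
    linear_combination ((41/15625:ℂ))*Complex.I_sq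
  have pre : ∀ (x y : ℝ), (w * ((x:ℂ) + (y:ℂ)*Complex.I)).re = 5*x - 8*y := by
    intro x y
    rw [hwdef]
    simp only [Complex.mul_re, Complex.add_re, Complex.add_im, Complex.mul_im,
      Complex.ofReal_re, Complex.ofReal_im, Complex.I_re, Complex.I_im]
    norm_num
  have p1 : (w * β^1).re = -2/5 := by rw [q1, pre]; norm_num
  have p1' : (w * β).re = -2/5 := by rw [← pow_one β, p1]
  have p2 : (w * β^2).re = -17/25 := by rw [q2, pre]; norm_num
  have p3 : (w * β^3).re = 78/125 := by rw [q3, pre]; norm_num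
  have p4 : (w * β^4).re = -227/625 := by rw [q4, pre]; norm_num
  have p5 : (w * β^5).re = 518/3125 := by rw [q5, pre]; norm_num
  have p6 : (w * β^6).re = -937/15625 := by rw [q6, pre]; norm_num
  have habs : Summable (fun j:ℕ => |(w * β^(j+1)).re|) := summ_aux_re β hβ1 w
  -- split the sum
  have hsplit := (Summable.sum_add_tsum_nat_add 6 habs).symm
  -- finite part
  have hfin : ∑ j ∈ Finset.range 6, |(w * β^(j+1)).re| = 35827/15625 := by
    rw [Finset.sum_range_succ, Finset.sum_range_succ, Finset.sum_range_succ,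
      Finset.sum_range_succ, Finset.sum_range_succ, Finset.sum_range_succ,
      Finset.sum_range_zero]
    norm_num [p1', p2, p3, p4, p5, p6, abs_of_pos]
  -- tail bound
  have hwnorm : ‖w‖ ≤ 10 := by
    have h1 : ‖w‖^2 = 89 := by
      rw [Complex.sq_norm, hwdef]
      simp [Complex.normSq_apply]
      norm_num
    nlinarith [norm_nonneg w]
  have hβnorm : ‖β‖ ≤ 1/2 := by
    rw [hβdef, norm_inv, normB]
    have h5 : (2:ℝ) ≤ Real.sqrt (((2:ℕ):ℝ)^2+1) := by
      have : ((4:ℝ)) ≤ (((2:ℕ):ℝ)^2+1) := by norm_num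
      nlinarith [Real.sq_sqrt (show (0:ℝ) ≤ ((2:ℕ):ℝ)^2+1 by positivity),
        Real.sqrt_nonneg (((2:ℕ):ℝ)^2+1)]
    rw [inv_le_comm₀ (by linarith) (by norm_num), show ((1:ℝ)/2)⁻¹ = 2 by norm_num]
    exact h5
  have htailb : Summable (fun j:ℕ => (10:ℝ) * (1/2)^(j+7)) := by
    apply Summable.mul_left
    exact (summable_geometric_of_lt_one (by norm_num) (by norm_num)).comp_injective
      (add_left_injective 7)
  have htail : ∑' j:ℕ, |(w * β^(j+6+1)).re| ≤ 5/32 := by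
    have hle : ∀ j:ℕ, |(w * β^(j+6+1)).re| ≤ (10:ℝ) * (1/2)^(j+7) := by
      intro j
      calc |(w * β^(j+6+1)).re| ≤ ‖w * β^(j+6+1)‖ := Complex.abs_re_le_norm _
        _ = ‖w‖ * ‖β‖^(j+7) := by rw [norm_mul, norm_pow]
        _ ≤ 10 * (1/2)^(j+7) := by
            apply mul_le_mul hwnorm (pow_le_pow_left₀ (norm_nonneg β) hβnorm _)
              (by positivity) (by norm_num)
    calc ∑' j:ℕ, |(w * β^(j+6+1)).re| ≤ ∑' j:ℕ, (10:ℝ) * (1/2)^(j+7) := by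
          apply Summable.tsum_le_tsum hle _ htailb
          exact (summable_nat_add_iff (f := fun j:ℕ => |(w * β^(j+1)).re|) 6).mpr habs
      _ = 10 * (1/2)^7 * ∑' j:ℕ, ((1/2):ℝ)^j := by
          rw [← tsum_mul_left]
          exact tsum_congr (fun j => by ring)
      _ = 5/32 := by
          rw [tsum_geometric_of_lt_one (by norm_num) (by norm_num)]
          norm_num
  have hS : ∑' j:ℕ, |(w * β^(j+1)).re| ≤ 35827/15625 + 5/32 := by
    rw [hsplit, hfin]
    have : ∀ j:ℕ, |(w * β^(j+6+1)).re| = |(w*β^(j+6+1)).re| := fun _ => rfl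
    linarith [htail]
  have hkey' : 5 * |(c 0:ℝ)| ≤ 2 * ((2:ℕ):ℝ)^2 * ∑' j:ℕ, |(w * β^(j+1)).re| := hkey
  have h8 : (2:ℝ)*((2:ℕ):ℝ)^2 = 8 := by norm_num
  rw [h8] at hkey'
  linarith [hkey', hc0', hS]

lemma zpow_conv (b : ℂ) (j : ℕ) : b ^ (-((j:ℤ)+1)) = (b⁻¹) ^ (j+1) := by
  rw [show (-((j:ℤ)+1)) = -((j+1 : ℕ) : ℤ) by push_cast; ring, zpow_neg, zpow_natCast, inv_pow]

lemma zpow_conv' (b : ℂ) (k : ℕ) : b ^ (-(k:ℤ)) = (b⁻¹) ^ k := by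
  rw [zpow_neg, zpow_natCast, inv_pow]

lemma num_ge5 (n : ℕ) (hn : 5 ≤ n) : 2*(n:ℝ)^2 < 3 * (Real.sqrt ((n:ℝ)^2+1) - 1)^2 := by
  have hn' : (5:ℝ) ≤ (n:ℝ) := by exact_mod_cast hn
  set s := Real.sqrt ((n:ℝ)^2+1) with hs
  have hs2 : s^2 = (n:ℝ)^2+1 := Real.sq_sqrt (by positivity)
  have hs0 : 0 ≤ s := Real.sqrt_nonneg _
  nlinarith [sq_nonneg (6*s - ((n:ℝ)^2+6)), sq_nonneg ((n:ℝ)^2 - 25), sq_nonneg s]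

lemma num_34 (n : ℕ) (hn : 3 ≤ n) : 2*(n:ℝ)^2 < 4 * (Real.sqrt ((n:ℝ)^2+1) - 1)^2 := by
  have hn' : (3:ℝ) ≤ (n:ℝ) := by exact_mod_cast hn
  set s := Real.sqrt ((n:ℝ)^2+1) with hs
  have hs2 : s^2 = (n:ℝ)^2+1 := Real.sq_sqrt (by positivity)
  have hs0 : 0 ≤ s := Real.sqrt_nonneg _
  nlinarith [sq_nonneg (4*s - ((n:ℝ)^2+4)), sq_nonneg ((n:ℝ)^2 - 9), sq_nonneg s]

lemma core (n : ℕ) (hn : 2 ≤ n) (c : ℕ → ℤ) (hbd : ∀ j, |c j| ≤ 2 * (n:ℤ)^2)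
    (h5 : 5 ≤ n → 3 ≤ |c 0|) (h4 : n < 5 → 4 ≤ |c 0|)
    (hsum : ∑' j : ℕ, (c j : ℂ) * ((-(n:ℂ) + Complex.I)⁻¹)^(j+1) = 0) : False := by
  rcases Nat.lt_or_ge n 5 with h | h
  · rcases Nat.lt_or_ge n 3 with h2 | h3
    · have hn2 : n = 2 := by omega
      subst hn2
      exact core_two c hbd (h4 (by omega)) hsum
    · exact core_ge3 n h3 c hbd hsum 4 (by norm_num)
        (by have := h4 h; rw [← Int.cast_abs]; exact_mod_cast this) (num_34 n h3)
  · exact core_ge3 n (by omega) c hbd hsum 3 (by norm_num)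
      (by have := h5 h; rw [← Int.cast_abs]; exact_mod_cast this) (num_ge5 n h)

theorem stmt_6 (n : ℕ) (hn : 2 ≤ n) (D : Set ℤ)
    (hD : D ⊆ Set.Icc 0 ((n : ℤ) ^ 2))
    (hsparse : Sparse n (D - D))
    (k : ℕ) (hk : 1 ≤ k) (δ δ' : Fin k → ℤ)
    (hδ : ∀ j, δ j ∈ D - D) (hδ' : ∀ j, δ' j ∈ D - D)
    (hne : ∃ j, δ j ≠ δ' j) :
    Disjoint (kTile (-(n : ℂ) + Complex.I) (extTile n) k δ)
      (kTile (-(n : ℂ) + Complex.I) (extTile n) k δ') := by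
  rw [Set.disjoint_left]
  intro z hz1 hz2
  obtain ⟨t, ht, hzt⟩ := hz1
  obtain ⟨d, hdbd, rfl⟩ := ht
  obtain ⟨t', ht', hzt'⟩ := hz2
  obtain ⟨d', hdbd', rfl⟩ := ht'
  set B : ℂ := -(n:ℂ) + Complex.I with hB
  set β : ℂ := B⁻¹ with hβdef
  have hβ1 : ‖β‖ < 1 := normβ n hn
  have hBne : B ≠ 0 := Bne n hn
  have hβne : β ≠ 0 := by rw [hβdef]; exact inv_ne_zero hBne
  clear_value β
  clear_value B
  -- bound on elements of D - D
  have Dbound : ∀ x ∈ D - D, |x| ≤ (n:ℤ)^2 := by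
    intro x hx
    obtain ⟨a, ha, b, hb, rfl⟩ := Set.mem_sub.mp hx
    have h1 := hD ha
    have h2 := hD hb
    rw [Set.mem_Icc] at h1 h2
    rw [abs_le]
    omega
  -- the digit difference sequence
  set c : ℕ → ℤ := fun j => if h : j < k then δ ⟨j, h⟩ - δ' ⟨j, h⟩ else d (j-k) - d' (j-k)
    with hc
  have hcbd : ∀ j, |c j| ≤ 2 * (n:ℤ)^2 := by
    intro j
    by_cases h : j < k
    · simp only [hc, dif_pos h]
      have h1 := Dbound _ (hδ ⟨j, h⟩)
      have h2 := Dbound _ (hδ' ⟨j, h⟩)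
      rw [abs_le] at *
      omega
    · simp only [hc, dif_neg h]
      have h1 := hdbd (j-k)
      have h2 := hdbd' (j-k)
      rw [abs_le] at *
      omega
  have hM : ∀ (e : ℕ → ℤ), (∀ j, |e j| ≤ 2 * (n:ℤ)^2) →
      ∀ j, ‖((e j : ℂ))‖ ≤ 2*(n:ℝ)^2 := by
    intro e he j
    rw [norm_intCast', ← Int.cast_abs]
    calc ((|e j| : ℤ) : ℝ) ≤ ((2*(n:ℤ)^2 : ℤ) : ℝ) := by exact_mod_cast he j
      _ = 2*(n:ℝ)^2 := by push_cast; ring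
  have hsummc : Summable (fun j : ℕ => (c j : ℂ) * β^(j+1)) :=
    summ_aux β hβ1 _ _ (hM c hcbd)
  have hsummd : Summable (fun j : ℕ => (d j : ℂ) * β^(j+1)) := by
    apply summ_aux β hβ1 (2*(n:ℝ)^2)
    intro j
    rw [norm_intCast', ← Int.cast_abs]
    have h1 := hdbd j
    calc ((|d j| : ℤ) : ℝ) ≤ (((n:ℤ)^2 : ℤ) : ℝ) := by exact_mod_cast h1
      _ ≤ 2*(n:ℝ)^2 := by push_cast; nlinarith [sq_nonneg (n:ℝ)]
  have hsummd' : Summable (fun j : ℕ => (d' j : ℂ) * β^(j+1)) := by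
    apply summ_aux β hβ1 (2*(n:ℝ)^2)
    intro j
    rw [norm_intCast', ← Int.cast_abs]
    have h1 := hdbd' j
    calc ((|d' j| : ℤ) : ℝ) ≤ (((n:ℤ)^2 : ℤ) : ℝ) := by exact_mod_cast h1
      _ ≤ 2*(n:ℝ)^2 := by push_cast; nlinarith [sq_nonneg (n:ℝ)]
  -- rewrite piSum in terms of β
  have hpi : ∀ e : ℕ → ℤ, piSum B e = ∑' j : ℕ, (e j : ℂ) * β^(j+1) := by
    intro e
    exact tsum_congr (fun j => by rw [hβdef, zpow_conv])
  -- the total sum vanishes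
  have hcs : ∑' j : ℕ, (c j : ℂ) * β^(j+1) = 0 := by
    have hsplit := Summable.sum_add_tsum_nat_add k hsummc
    have hfin : ∑ i ∈ Finset.range k, (c i : ℂ) * β^(i+1)
        = ∑ j : Fin k, ((δ j - δ' j : ℤ) : ℂ) * β^((j:ℕ)+1) := by
      rw [← Fin.sum_univ_eq_sum_range (fun i => (c i : ℂ) * β^(i+1)) k]
      apply Finset.sum_congr rfl
      intro j _
      congr 2
      simp only [hc, Fin.is_lt, dif_pos, Fin.eta]
    have htail : ∑' j : ℕ, (c (j+k) : ℂ) * β^(j+k+1)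
        = β^k * (∑' j : ℕ, (d j : ℂ) * β^(j+1) - ∑' j : ℕ, (d' j : ℂ) * β^(j+1)) := by
      have e1 : ∀ j : ℕ, (c (j+k) : ℂ) * β^(j+k+1)
          = β^k * (((d j : ℂ) - (d' j : ℂ)) * β^(j+1)) := by
        intro j
        simp only [hc, dif_neg (by omega : ¬ j + k < k), Nat.add_sub_cancel]
        push_cast
        ring
      rw [tsum_congr e1, tsum_mul_left]
      congr 1
      calc ∑' j:ℕ, ((d j:ℂ) - (d' j:ℂ)) * β^(j+1)
          = ∑' j:ℕ, ((d j:ℂ) * β^(j+1) - (d' j:ℂ) * β^(j+1)) := tsum_congr (fun j => by ring)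
        _ = ∑' j:ℕ, (d j:ℂ) * β^(j+1) - ∑' j:ℕ, (d' j:ℂ) * β^(j+1) := Summable.tsum_sub hsummd hsummd'
    rw [← hsplit, hfin, htail]
    have hzt2 : z = (∑ j : Fin k, ((δ j : ℤ):ℂ) * β^((j:ℕ)+1))
        + β^k * (∑' j:ℕ, (d j:ℂ) * β^(j+1)) := by
      rw [hzt, hpi d]
      simp only [zpow_conv, zpow_conv', ← hβdef]
    have hzt2' : z = (∑ j : Fin k, ((δ' j : ℤ):ℂ) * β^((j:ℕ)+1))
        + β^k * (∑' j:ℕ, (d' j:ℂ) * β^(j+1)) := by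
      rw [hzt', hpi d']
      simp only [zpow_conv, zpow_conv', ← hβdef]
    have hsub : ∑ j : Fin k, ((δ j - δ' j : ℤ):ℂ) * β^((j:ℕ)+1)
        = (∑ j : Fin k, ((δ j : ℤ):ℂ) * β^((j:ℕ)+1))
          - ∑ j : Fin k, ((δ' j : ℤ):ℂ) * β^((j:ℕ)+1) := by
      rw [← Finset.sum_sub_distrib]
      apply Finset.sum_congr rfl
      intro j _
      push_cast
      ring
    rw [hsub]
    linear_combination hzt2' - hzt2
  -- least nonzero index
  have hex : ∃ j : ℕ, c j ≠ 0 := by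
    obtain ⟨j0, hj0⟩ := hne
    refine ⟨(j0:ℕ), ?_⟩
    simp only [hc, dif_pos j0.isLt, Fin.eta]
    exact sub_ne_zero_of_ne hj0
  set m := Nat.find hex with hm
  have hcm : c m ≠ 0 := Nat.find_spec hex
  have hmin : ∀ i, i < m → c i = 0 := by
    intro i hi
    have := Nat.find_min hex hi
    simpa using this
  have hmk : m < k := by
    obtain ⟨j0, hj0⟩ := hne
    have h1 : m ≤ (j0:ℕ) := by
      apply Nat.find_min' hex
      simp only [hc, dif_pos j0.isLt, Fin.eta]
      exact sub_ne_zero_of_ne hj0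
    exact lt_of_le_of_lt h1 j0.isLt
  have hsum2 : ∑' j : ℕ, (c (m+j) : ℂ) * β^(j+1) = 0 := by
    have hsplit2 := Summable.sum_add_tsum_nat_add m hsummc
    have hzero : ∑ i ∈ Finset.range m, (c i:ℂ) * β^(i+1) = 0 := by
      apply Finset.sum_eq_zero
      intro i hi
      rw [hmin i (Finset.mem_range.mp hi)]
      simp
    rw [hcs, hzero, zero_add] at hsplit2
    have e2 : ∀ j:ℕ, (c (j+m):ℂ) * β^(j+m+1) = β^m * ((c (j+m):ℂ) * β^(j+1)) := by
      intro j
      rw [show j+m+1 = (j+1)+m by ring, pow_add]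
      ring
    rw [tsum_congr e2, tsum_mul_left] at hsplit2
    have hβm : (β:ℂ)^m ≠ 0 := pow_ne_zero m hβne
    have h0 := (mul_eq_zero.mp hsplit2).resolve_left hβm
    rw [← h0]
    exact tsum_congr (fun j => by rw [Nat.add_comm m j])
  have hceq : c m = δ ⟨m,hmk⟩ - δ' ⟨m,hmk⟩ := by simp only [hc, dif_pos hmk]
  have hdne : δ ⟨m,hmk⟩ ≠ δ' ⟨m,hmk⟩ := by
    intro hEq
    apply hcm
    rw [hceq, hEq, sub_self]
  have hsp := hsparse _ (hδ ⟨m,hmk⟩) _ (hδ' ⟨m,hmk⟩) hdne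
  refine core n hn (fun j => c (m+j)) (fun j => hcbd (m+j)) (fun h5n => ?_) (fun h4n => ?_) ?_
  · show 3 ≤ |c (m+0)|
    rw [Nat.add_zero, hceq]
    have := hsp.1 h5n
    linarith
  · show 4 ≤ |c (m+0)|
    rw [Nat.add_zero, hceq]
    have := hsp.2 (by omega)
    linarith
  · rw [hβdef, hB] at hsum2
    exact hsum2
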